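/- Let k₁ ∈ (0,1] and k₂ > 0 and f̄₂ > 0. Define G(k₁,k₂) = (f̄₂/k₂³)·[1 + (2k₂ + 1 + 4k₁k₂ − 2k₁)k₂ − (3 + 2k₁)k₂² − k₂³]. Then: if k₂ < 1, G(k₁,k₂) > 0; if k₂ = 1, G(k₁,k₂) = 0; if k₂ > 1, G(k₁,k₂) < 0. -/
import Mathlib

/-- Sign of G(k₁,k₂) = P(1/k₂) according to whether k₂ <, =, > 1. -/
theorem stmt_4 (k1 k2 f2 : ℝ) (hk1 : k1 ∈ Set.Ioc (0:ℝ) 1) (hk2 : 0 < k2) (hf2 : 0 < f2) :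
    let G : ℝ := (f2 / k2 ^ 3) *
      (1 + (2 * k2 + 1 + 4 * k1 * k2 - 2 * k1) * k2 - (3 + 2 * k1) * k2 ^ 2 - k2 ^ 3)
    (k2 < 1 → 0 < G) ∧ (k2 = 1 → G = 0) ∧ (1 < k2 → G < 0) := by
  obtain ⟨h1, h2⟩ := hk1
  intro G
  have hc : 0 < f2 / k2 ^ 3 := by positivity
  have hB : (1 + (2 * k2 + 1 + 4 * k1 * k2 - 2 * k1) * k2 - (3 + 2 * k1) * k2 ^ 2 - k2 ^ 3)
      = (1 - k2) * ((1 + k2) ^ 2 - 2 * k1 * k2) := by ring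
  have hpos : 0 < (1 + k2) ^ 2 - 2 * k1 * k2 := by nlinarith [sq_nonneg (1 - k2)]
  have hG : G = f2 / k2 ^ 3 * ((1 - k2) * ((1 + k2) ^ 2 - 2 * k1 * k2)) := by
    simp only [G]; rw [hB]
  refine ⟨fun h => ?_, fun h => ?_, fun h => ?_⟩
  · rw [hG]
    have : 0 < 1 - k2 := by linarith
    positivity
  · rw [hG, h]; ring
  · rw [hG]
    exact mul_neg_of_pos_of_neg hc (mul_neg_of_neg_of_pos (by linarith) hpos)
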